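/- Let (X,T) be a topological dynamical system and 𝒰 a finite open cover, with coefficients c_S^n = 2^{-n}. Then the average configuration complexity satisfies Acc(X,𝒰,T) = (1/2)·Asc(X,𝒰,T), where Acc(X,𝒰,T) = lim_n (1/n) 2^{-n} Σ_{S ⊆ {0,...,n-1}, 0 ∈ S} log N(𝒰_S) and Asc(X,𝒰,T) = lim_n (1/n) 2^{-n} Σ_{S ⊆ {0,...,n-1}} log N(𝒰_S). -/

import Mathlib

open Filter Topology

/-- Minimal cardinality of a finite subcover of the family `U` covering all of `X`. -/
noncomputable def coverN {X : Type*} (U : Set (Set X)) : ℕ :=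
  sInf {m : ℕ | ∃ V : Finset (Set X),
    ↑V ⊆ U ∧ V.card = m ∧ ⋃₀ (V : Set (Set X)) = Set.univ}

/-- The join `𝒰_S = ⋁_{i ∈ S} T^{-i} 𝒰`. -/
def coverJoin {X : Type*} (T : X → X) (U : Set (Set X)) (S : Finset ℕ) : Set (Set X) :=
  {A | ∃ f : ℕ → Set X, (∀ i ∈ S, f i ∈ U) ∧ A = ⋂ i ∈ S, T^[i] ⁻¹' f i}

section Aux

variable {X : Type*} {T : X → X} {U : Set (Set X)}

lemma coverJoin_isOpen [TopologicalSpace X] (hT : Continuous T)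
    (hUopen : ∀ A ∈ U, IsOpen A) {S : Finset ℕ} {A : Set X}
    (hA : A ∈ coverJoin T U S) : IsOpen A := by
  obtain ⟨f, hf, rfl⟩ := hA
  exact isOpen_biInter_finset fun i hi => (hUopen _ (hf i hi)).preimage (hT.iterate i)

lemma coverJoin_sUnion (hUcov : ⋃₀ U = Set.univ) (S : Finset ℕ) :
    ⋃₀ coverJoin T U S = Set.univ := by
  apply Set.eq_univ_of_forall
  intro x
  have h : ∀ i : ℕ, ∃ B ∈ U, T^[i] x ∈ B := by
    intro i
    have : T^[i] x ∈ ⋃₀ U := hUcov ▸ Set.mem_univ _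
    simpa [Set.mem_sUnion] using this
  choose f hfU hfx using h
  exact ⟨_, ⟨f, fun i _ => hfU i, rfl⟩, Set.mem_iInter₂.2 fun i _ => hfx i⟩

lemma coverN_le {V : Finset (Set X)} {W : Set (Set X)} (h1 : ↑V ⊆ W)
    (h2 : ⋃₀ (V : Set (Set X)) = Set.univ) : coverN W ≤ V.card :=
  Nat.sInf_le ⟨V, h1, rfl, h2⟩

/-- existence of a minimal finite subcover for the joins -/
lemma coverN_spec [TopologicalSpace X] [CompactSpace X] (hT : Continuous T)
    (hUopen : ∀ A ∈ U, IsOpen A) (hUcov : ⋃₀ U = Set.univ) (S : Finset ℕ) :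
    ∃ V : Finset (Set X), ↑V ⊆ coverJoin T U S ∧ V.card = coverN (coverJoin T U S) ∧
      ⋃₀ (V : Set (Set X)) = Set.univ := by
  classical
  have hne : {m : ℕ | ∃ V : Finset (Set X),
      ↑V ⊆ coverJoin T U S ∧ V.card = m ∧ ⋃₀ (V : Set (Set X)) = Set.univ}.Nonempty := by
    obtain ⟨t, ht⟩ := isCompact_univ.elim_finite_subcover
      (fun A : coverJoin T U S => (A : Set X))
      (fun A => coverJoin_isOpen hT hUopen A.2)
      (by
        intro x _
        have : x ∈ ⋃₀ coverJoin T U S := (coverJoin_sUnion hUcov S) ▸ Set.mem_univ x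
        obtain ⟨B, hB, hxB⟩ := this
        exact Set.mem_iUnion.2 ⟨⟨B, hB⟩, hxB⟩)
    refine ⟨(t.image Subtype.val).card, t.image Subtype.val, ?_, rfl, ?_⟩
    · intro B hB
      simp only [Finset.coe_image, Set.mem_image, Finset.mem_coe] at hB
      obtain ⟨b, _, rfl⟩ := hB
      exact b.2
    · apply Set.eq_univ_of_forall
      intro x
      have := ht (Set.mem_univ x)
      simp only [Set.mem_iUnion] at this
      obtain ⟨i, hi, hxi⟩ := this
      refine ⟨(i : Set X), ?_, hxi⟩
      simp only [Finset.coe_image, Set.mem_image, Finset.mem_coe]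
      exact ⟨i, hi, rfl⟩
  obtain ⟨V, hV1, hV2, hV3⟩ := Nat.sInf_mem hne
  exact ⟨V, hV1, hV2.symm ▸ rfl, hV3⟩

lemma coverN_pos [TopologicalSpace X] [CompactSpace X] [Nonempty X] (hT : Continuous T)
    (hUopen : ∀ A ∈ U, IsOpen A) (hUcov : ⋃₀ U = Set.univ) (S : Finset ℕ) :
    0 < coverN (coverJoin T U S) := by
  obtain ⟨V, _, hcard, hcov⟩ := coverN_spec hT hUopen hUcov S
  rcases Nat.eq_zero_or_pos (coverN (coverJoin T U S)) with h | h
  · exfalso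
    rw [h, Finset.card_eq_zero] at hcard
    rw [hcard] at hcov
    simp at hcov
    exact (Set.univ_nonempty (α := X)).ne_empty hcov.symm
  · exact h

/-- Monotonicity: a bigger configuration gives a finer cover. -/
lemma coverN_mono_subset [TopologicalSpace X] [CompactSpace X] (hT : Continuous T)
    (hUopen : ∀ A ∈ U, IsOpen A) (hUcov : ⋃₀ U = Set.univ)
    {S S' : Finset ℕ} (hSS : S ⊆ S') :
    coverN (coverJoin T U S) ≤ coverN (coverJoin T U S') := by
  classical
  obtain ⟨V', hV1, hV2, hV3⟩ := coverN_spec hT hUopen hUcov S'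
  · -- choose a superset in coverJoin S for each element of coverJoin S'
    have key : ∀ A ∈ coverJoin T U S', ∃ B ∈ coverJoin T U S, A ⊆ B := by
      rintro A ⟨f, hf, rfl⟩
      refine ⟨⋂ i ∈ S, T^[i] ⁻¹' f i, ⟨f, fun i hi => hf i (hSS hi), rfl⟩, ?_⟩
      exact Set.biInter_subset_biInter_left hSS
    choose! g hg1 hg2 using key
    have hcov : ⋃₀ ((V'.image g : Finset (Set X)) : Set (Set X)) = Set.univ := by
      apply Set.eq_univ_of_forall
      intro x
      have : x ∈ ⋃₀ (V' : Set (Set X)) := hV3 ▸ Set.mem_univ x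
      obtain ⟨B, hB, hxB⟩ := this
      refine ⟨g B, ?_, hg2 B (hV1 hB) hxB⟩
      simp only [Finset.coe_image, Set.mem_image, Finset.mem_coe]
      exact ⟨B, hB, rfl⟩
    have hsub : ↑(V'.image g) ⊆ coverJoin T U S := by
      intro B hB
      simp only [Finset.coe_image, Set.mem_image, Finset.mem_coe] at hB
      obtain ⟨b, hb, rfl⟩ := hB
      exact hg1 b (hV1 hb)
    calc coverN (coverJoin T U S) ≤ (V'.image g).card := coverN_le hsub hcov
      _ ≤ V'.card := Finset.card_image_le
      _ = coverN (coverJoin T U S') := hV2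


end Aux

section Aux2
variable {X : Type*} {T : X → X} {U : Set (Set X)}

lemma coverN_insert_zero_le [TopologicalSpace X] [CompactSpace X] (hT : Continuous T)
    (hUopen : ∀ A ∈ U, IsOpen A) (hUcov : ⋃₀ U = Set.univ)
    {S : Finset ℕ} (hS : 0 ∉ S) :
    coverN (coverJoin T U (insert 0 S)) ≤
      coverN (coverJoin T U {0}) * coverN (coverJoin T U S) := by
  classical
  obtain ⟨V, hV1, hV2, hV3⟩ := coverN_spec hT hUopen hUcov {0}
  obtain ⟨W, hW1, hW2, hW3⟩ := coverN_spec hT hUopen hUcov S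
  set Z := (V ×ˢ W).image (fun p => p.1 ∩ p.2) with hZ
  have hZsub : ↑Z ⊆ coverJoin T U (insert 0 S) := by
    intro C hC
    simp only [hZ, Finset.coe_image, Set.mem_image, Finset.mem_coe,
      Finset.mem_product] at hC
    obtain ⟨⟨A, B⟩, ⟨hAV, hBW⟩, rfl⟩ := hC
    obtain ⟨f, hf, hA⟩ := hV1 hAV
    obtain ⟨g, hg, hB⟩ := hW1 hBW
    dsimp only at hA hB
    refine ⟨Function.update g 0 (f 0), ?_, ?_⟩
    · intro i hi
      rcases Finset.mem_insert.1 hi with rfl | hi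
      · simpa using hf 0 (by simp)
      · rw [Function.update_of_ne (by rintro rfl; exact hS hi)]
        exact hg i hi
    · have h1 : (⋂ i ∈ insert 0 S, T^[i] ⁻¹' (Function.update g 0 (f 0) i))
          = (T^[0] ⁻¹' f 0) ∩ ⋂ i ∈ S, T^[i] ⁻¹' (Function.update g 0 (f 0) i) := by
        rw [Finset.set_biInter_insert]
        simp
      have h2 : (⋂ i ∈ S, T^[i] ⁻¹' (Function.update g 0 (f 0) i))
          = ⋂ i ∈ S, T^[i] ⁻¹' (g i) := by
        apply Set.iInter₂_congr
        intro i hi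
        rw [Function.update_of_ne (by rintro rfl; exact hS hi)]
      have h3 : A = T^[0] ⁻¹' f 0 := by
        rw [hA]
        simp
      rw [h1, h2, ← h3, ← hB]
  have hZcov : ⋃₀ (Z : Set (Set X)) = Set.univ := by
    apply Set.eq_univ_of_forall
    intro x
    have hxV : x ∈ ⋃₀ (V : Set (Set X)) := hV3 ▸ Set.mem_univ x
    have hxW : x ∈ ⋃₀ (W : Set (Set X)) := hW3 ▸ Set.mem_univ x
    obtain ⟨A, hA, hxA⟩ := hxV
    obtain ⟨B, hB, hxB⟩ := hxW
    refine ⟨A ∩ B, ?_, hxA, hxB⟩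
    simp only [hZ, Finset.coe_image, Set.mem_image, Finset.mem_coe, Finset.mem_product]
    exact ⟨(A, B), ⟨hA, hB⟩, rfl⟩
  calc coverN (coverJoin T U (insert 0 S)) ≤ Z.card := coverN_le hZsub hZcov
    _ ≤ (V ×ˢ W).card := Finset.card_image_le
    _ = V.card * W.card := Finset.card_product V W
    _ = _ := by rw [hV2, hW2]

end Aux2

/-- With uniform coefficients `c_S^n = 2^{-n}`, the average configuration
complexity (the average restricted to subsets containing `0`) equals one half of the
average sample complexity: `Acc(X,𝒰,T) = (1/2)·Asc(X,𝒰,T)`. -/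
theorem acc_eq_half_asc {X : Type*} [TopologicalSpace X] [CompactSpace X]
    (T : X → X) (hT : Continuous T)
    (U : Set (Set X)) (hUfin : U.Finite) (hUopen : ∀ A ∈ U, IsOpen A)
    (hUcov : ⋃₀ U = Set.univ)
    (A : ℝ)
    (hA : Tendsto (fun n : ℕ =>
        (1 / n : ℝ) * (2 ^ n : ℝ)⁻¹ * ∑ S ∈ (Finset.range n).powerset,
          Real.log (coverN (coverJoin T U S))) atTop (𝓝 A)) :
    Tendsto (fun n : ℕ =>
        (1 / n : ℝ) * (2 ^ n : ℝ)⁻¹ *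
          ∑ S ∈ (Finset.range n).powerset.filter (fun S => 0 ∈ S),
            Real.log (coverN (coverJoin T U S))) atTop (𝓝 (A / 2)) := by
  classical
  by_cases hX : Nonempty X
  swap
  · -- X is empty : everything is zero
    have hXe : IsEmpty X := not_nonempty_iff.1 hX
    have hzero : ∀ S : Finset ℕ, coverN (coverJoin T U S) = 0 := by
      intro S
      apply Nat.sInf_eq_zero.2
      left
      refine ⟨∅, by simp, rfl, ?_⟩
      simp [Set.univ_eq_empty_iff.2 hXe]
    have h0 : Tendsto (fun n : ℕ =>
        (1 / n : ℝ) * (2 ^ n : ℝ)⁻¹ * ∑ S ∈ (Finset.range n).powerset,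
          Real.log (coverN (coverJoin T U S))) atTop (𝓝 0) := by
      simpa [hzero] using tendsto_const_nhds (α := ℝ) (f := atTop (α := ℕ))
    have hA0 : A = 0 := tendsto_nhds_unique hA h0
    rw [hA0]
    norm_num
    simpa [hzero] using tendsto_const_nhds (α := ℝ) (f := atTop (α := ℕ))
  · haveI := hX
    set ℓ : Finset ℕ → ℝ := fun S => Real.log (coverN (coverJoin T U S)) with hℓdef
    set L : ℝ := ℓ {0} with hLdef
    have hNpos : ∀ S : Finset ℕ, (0 : ℝ) < (coverN (coverJoin T U S) : ℝ) := by
      intro S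
      exact_mod_cast coverN_pos hT hUopen hUcov S
    have hLnonneg : 0 ≤ L := Real.log_natCast_nonneg _
    have hmono : ∀ S : Finset ℕ, ℓ S ≤ ℓ (insert 0 S) := by
      intro S
      apply Real.log_le_log (hNpos S)
      exact_mod_cast coverN_mono_subset hT hUopen hUcov (Finset.subset_insert 0 S)
    have hsubadd : ∀ S : Finset ℕ, 0 ∉ S → ℓ (insert 0 S) ≤ L + ℓ S := by
      intro S hS
      have h := coverN_insert_zero_le hT hUopen hUcov hS
      have h2 : ℓ (insert 0 S) ≤
          Real.log ((coverN (coverJoin T U {0}) * coverN (coverJoin T U S) : ℕ) : ℝ) :=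
        Real.log_le_log (hNpos _) (by exact_mod_cast h)
      rwa [Nat.cast_mul, Real.log_mul (hNpos _).ne' (hNpos _).ne'] at h2
    -- sum abbreviations
    set a : ℕ → ℝ := fun n => ∑ S ∈ (Finset.range n).powerset, ℓ S with hadef
    set b : ℕ → ℝ := fun n =>
      ∑ S ∈ (Finset.range n).powerset.filter (fun S => 0 ∈ S), ℓ S with hbdef
    set d : ℕ → ℝ := fun n =>
      ∑ S ∈ (Finset.range n).powerset.filter (fun S => ¬ 0 ∈ S), ℓ S with hddef
    have hsplit : ∀ n, b n + d n = a n := fun n =>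
      Finset.sum_filter_add_sum_filter_not _ _ _
    have hbij : ∀ n : ℕ, 1 ≤ n → b n =
        ∑ S ∈ (Finset.range n).powerset.filter (fun S => ¬ 0 ∈ S), ℓ (insert 0 S) := by
      intro n hn
      apply Finset.sum_nbij' (fun S => S.erase 0) (fun S => insert 0 S)
      · intro S hS
        simp only [Finset.mem_filter, Finset.mem_powerset] at hS ⊢
        exact ⟨(Finset.erase_subset 0 S).trans hS.1, Finset.notMem_erase 0 S⟩
      · intro S hS
        simp only [Finset.mem_filter, Finset.mem_powerset] at hS ⊢
        refine ⟨Finset.insert_subset ?_ hS.1, Finset.mem_insert_self 0 S⟩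
        exact Finset.mem_range.2 hn
      · intro S hS
        simp only [Finset.mem_filter] at hS
        exact Finset.insert_erase hS.2
      · intro S hS
        simp only [Finset.mem_filter] at hS
        exact Finset.erase_insert hS.2
      · intro S hS
        simp only [Finset.mem_filter] at hS
        rw [Finset.insert_erase hS.2]
    have hdb : ∀ n : ℕ, 1 ≤ n → d n ≤ b n := by
      intro n hn
      rw [hbij n hn]
      exact Finset.sum_le_sum fun S _ => hmono S
    have hbd : ∀ n : ℕ, 1 ≤ n → b n ≤ d n + 2 ^ n * L := by
      intro n hn
      rw [hbij n hn]
      calc ∑ S ∈ (Finset.range n).powerset.filter (fun S => ¬ 0 ∈ S), ℓ (insert 0 S)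
          ≤ ∑ S ∈ (Finset.range n).powerset.filter (fun S => ¬ 0 ∈ S), (L + ℓ S) := by
            apply Finset.sum_le_sum
            intro S hS
            simp only [Finset.mem_filter] at hS
            exact hsubadd S hS.2
        _ = ((Finset.range n).powerset.filter (fun S => ¬ 0 ∈ S)).card * L + d n := by
            rw [Finset.sum_add_distrib, Finset.sum_const, nsmul_eq_mul]
        _ ≤ d n + 2 ^ n * L := by
            have hcard : (((Finset.range n).powerset.filter (fun S => ¬ 0 ∈ S)).card : ℝ)
                ≤ (2 : ℝ) ^ n := by
              have h1 : ((Finset.range n).powerset.filter (fun S => ¬ 0 ∈ S)).card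
                  ≤ 2 ^ n := by
                calc _ ≤ (Finset.range n).powerset.card := Finset.card_filter_le _ _
                  _ = 2 ^ n := by rw [Finset.card_powerset, Finset.card_range]
              exact_mod_cast h1
            nlinarith [hLnonneg]
    -- squeeze
    have hG : Tendsto (fun n : ℕ => ((1 / n : ℝ) * (2 ^ n : ℝ)⁻¹ * a n) / 2)
        atTop (𝓝 (A / 2)) := hA.div_const 2
    have hH : Tendsto (fun n : ℕ => ((1 / n : ℝ) * (2 ^ n : ℝ)⁻¹ * a n) / 2 + (L / 2) / n)
        atTop (𝓝 (A / 2)) := by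
      have := hG.add (tendsto_const_div_atTop_nhds_zero_nat (L / 2))
      simpa using this
    apply tendsto_of_tendsto_of_tendsto_of_le_of_le' hG hH
    · filter_upwards [eventually_ge_atTop 1] with n hn
      have hc : (0 : ℝ) ≤ (1 / n : ℝ) * (2 ^ n : ℝ)⁻¹ := by positivity
      have hab : a n ≤ 2 * b n := by
        have := hdb n hn
        have := hsplit n
        linarith
      have := mul_le_mul_of_nonneg_left hab hc
      show ((1 / n : ℝ) * (2 ^ n : ℝ)⁻¹ * a n) / 2 ≤ (1 / n : ℝ) * (2 ^ n : ℝ)⁻¹ * b n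
      linarith
    · filter_upwards [eventually_ge_atTop 1] with n hn
      have hc : (0 : ℝ) ≤ (1 / n : ℝ) * (2 ^ n : ℝ)⁻¹ := by positivity
      have hcc : (1 / n : ℝ) * (2 ^ n : ℝ)⁻¹ * (2 : ℝ) ^ n = 1 / n := by
        field_simp
      have hba : 2 * b n ≤ a n + 2 ^ n * L := by
        have := hbd n hn
        have := hsplit n
        linarith
      have h3 := mul_le_mul_of_nonneg_left hba hc
      show (1 / n : ℝ) * (2 ^ n : ℝ)⁻¹ * b n ≤
        ((1 / n : ℝ) * (2 ^ n : ℝ)⁻¹ * a n) / 2 + (L / 2) / n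
      have e1 : (1 / n : ℝ) * (2 ^ n : ℝ)⁻¹ * (a n + 2 ^ n * L)
          = (1 / n : ℝ) * (2 ^ n : ℝ)⁻¹ * a n + (1 / n : ℝ) * L := by
        rw [mul_add, ← mul_assoc, hcc]
      have e2 : (L / 2) / (n : ℝ) = (1 / n : ℝ) * L / 2 := by ring
      linarith [h3, e1]
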